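/- (Lemma 4, restated in the quantization level k.) For an integer k ≥ 2 set δ_k = 2·C_q/(k−1) and ε_∞(k) = log( δ_k / ∫_{C_q−δ_k}^{C_q} f_{−C_q/2}(t)·(t−(C_q−δ_k)) dt ), where f_{−C_q/2} is the density of N(−C_q/2, σ²). Then ε_∞ increases monotonically with k: for all integers 2 ≤ k₁ < k₂, ε_∞(k₁) < ε_∞(k₂). -/
import Mathlib


open MeasureTheory Real

/-- Density of the normal distribution `N(x, σ²)`. -/
noncomputable def gpdf (σ x t : ℝ) : ℝ :=
  (1 / (σ * Real.sqrt (2 * Real.pi))) * Real.exp (-(t - x) ^ 2 / (2 * σ ^ 2))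

/-- Quantization levels `B(r) = -C_q + r · δ`, with `δ = 2·C_q/(k-1)`. -/
noncomputable def Blev (Cq : ℝ) (k : ℕ) (r : ℕ) : ℝ :=
  -Cq + (r : ℝ) * (2 * Cq / ((k : ℝ) - 1))

/-- The quantized-Gaussian pmf `P_x(r)` on `{0, 1, …, k-1}`. -/
noncomputable def qgPmf (Cq σ : ℝ) (k : ℕ) (x : ℝ) (r : ℕ) : ℝ :=
  if r = 0 then
    (∫ t in Set.Iic (Blev Cq k 0), gpdf σ x t)
      + ∫ t in (Blev Cq k 0)..(Blev Cq k 1),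
          gpdf σ x t * (Blev Cq k 1 - t) / (2 * Cq / ((k : ℝ) - 1))
  else if r = k - 1 then
    (∫ t in (Blev Cq k (k - 2))..(Blev Cq k (k - 1)),
        gpdf σ x t * (t - Blev Cq k (k - 2)) / (2 * Cq / ((k : ℝ) - 1)))
      + ∫ t in Set.Ici (Blev Cq k (k - 1)), gpdf σ x t
  else
    (∫ t in (Blev Cq k (r - 1))..(Blev Cq k r),
        gpdf σ x t * (t - Blev Cq k (r - 1)) / (2 * Cq / ((k : ℝ) - 1)))
      + ∫ t in (Blev Cq k r)..(Blev Cq k (r + 1)),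
          gpdf σ x t * (Blev Cq k (r + 1) - t) / (2 * Cq / ((k : ℝ) - 1))

lemma gpdf_pos {σ : ℝ} (hσ : 0 < σ) (x t : ℝ) : 0 < gpdf σ x t := by
  unfold gpdf
  have := Real.pi_pos
  positivity

lemma gpdf_cont (σ x : ℝ) : Continuous (gpdf σ x) := by
  unfold gpdf
  fun_prop

lemma integ_pos {Cq σ δ : ℝ} (hσ : 0 < σ) (hδ : 0 < δ) :
    0 < ∫ t in (Cq - δ)..Cq, gpdf σ (-(Cq / 2)) t * (t - (Cq - δ)) := by
  apply intervalIntegral.integral_pos (by linarith)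
  · exact (((gpdf_cont σ _).mul (by fun_prop)).continuousOn)
  · intro x hx
    have := gpdf_pos hσ (-(Cq/2)) x
    nlinarith [hx.1]
  · exact ⟨Cq, ⟨by linarith, le_refl _⟩,
      by nlinarith [gpdf_pos hσ (-(Cq/2)) Cq]⟩

lemma key {Cq σ δ₁ δ₂ : ℝ} (hσ : 0 < σ) (h2 : 0 < δ₂) (h12 : δ₂ < δ₁) :
    (∫ t in (Cq - δ₂)..Cq, gpdf σ (-(Cq / 2)) t * (t - (Cq - δ₂))) / δ₂
      < (∫ t in (Cq - δ₁)..Cq, gpdf σ (-(Cq / 2)) t * (t - (Cq - δ₁))) / δ₁ := by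
  have h1 : 0 < δ₁ := h2.trans h12
  set f : ℝ → ℝ := gpdf σ (-(Cq / 2)) with hf
  rw [← intervalIntegral.integral_div, ← intervalIntegral.integral_div]
  have hcont : ∀ c d : ℝ, Continuous fun t => f t * (t - d) / c := by
    intro c d
    exact ((gpdf_cont σ _).mul (by fun_prop)).div_const c
  have hsplit : (∫ t in (Cq - δ₁)..Cq, f t * (t - (Cq - δ₁)) / δ₁)
      = (∫ t in (Cq - δ₁)..(Cq - δ₂), f t * (t - (Cq - δ₁)) / δ₁)
        + ∫ t in (Cq - δ₂)..Cq, f t * (t - (Cq - δ₁)) / δ₁ := by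
    rw [intervalIntegral.integral_add_adjacent_intervals]
    · exact (hcont δ₁ (Cq - δ₁)).intervalIntegrable _ _
    · exact (hcont δ₁ (Cq - δ₁)).intervalIntegrable _ _
  rw [hsplit]
  have hnn : 0 ≤ ∫ t in (Cq - δ₁)..(Cq - δ₂), f t * (t - (Cq - δ₁)) / δ₁ := by
    apply intervalIntegral.integral_nonneg (by linarith)
    intro u hu
    have := (gpdf_pos hσ (-(Cq/2)) u).le
    have h1' : 0 ≤ u - (Cq - δ₁) := by
      have := hu.1; linarith
    positivity
  have hlt : (∫ t in (Cq - δ₂)..Cq, f t * (t - (Cq - δ₂)) / δ₂)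
      < ∫ t in (Cq - δ₂)..Cq, f t * (t - (Cq - δ₁)) / δ₁ := by
    apply intervalIntegral.integral_lt_integral_of_continuousOn_of_le_of_exists_lt
      (by linarith) (hcont δ₂ (Cq - δ₂)).continuousOn (hcont δ₁ (Cq - δ₁)).continuousOn
    · intro x hx
      have hfp := (gpdf_pos hσ (-(Cq/2)) x).le
      rw [div_le_div_iff₀ h2 h1]
      have hx2 : x ≤ Cq := hx.2
      nlinarith [mul_nonneg (mul_nonneg hfp (by linarith : (0:ℝ) ≤ Cq - x))
        (by linarith : (0:ℝ) ≤ δ₁ - δ₂)]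
    · refine ⟨Cq - δ₂, ⟨le_refl _, by linarith⟩, ?_⟩
      have hfp := gpdf_pos hσ (-(Cq/2)) (Cq - δ₂)
      have : (0:ℝ) < f (Cq - δ₂) * (Cq - δ₂ - (Cq - δ₁)) / δ₁ := by
        have : (0:ℝ) < Cq - δ₂ - (Cq - δ₁) := by linarith
        positivity
      simpa using this.trans_le' (by simp)
  linarith

/-- Lemma 4, restated in the quantization level `k`: with `δ_k = 2·C_q/(k-1)`, the
privacy budget `ε_∞(k) = log(δ_k / ∫_{C_q-δ_k}^{C_q} f_{-C_q/2}(t)·(t-(C_q-δ_k)) dt)`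
increases monotonically with `k`. -/
theorem eps_infty_strictMono (Cq σ : ℝ) (hC : 0 < Cq) (hσ : 0 < σ)
    (k₁ k₂ : ℕ) (hk₁ : 2 ≤ k₁) (hk : k₁ < k₂) :
    Real.log ((2 * Cq / ((k₁ : ℝ) - 1)) /
        ∫ t in (Cq - 2 * Cq / ((k₁ : ℝ) - 1))..Cq,
          gpdf σ (-(Cq / 2)) t * (t - (Cq - 2 * Cq / ((k₁ : ℝ) - 1))))
      < Real.log ((2 * Cq / ((k₂ : ℝ) - 1)) /
          ∫ t in (Cq - 2 * Cq / ((k₂ : ℝ) - 1))..Cq,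
            gpdf σ (-(Cq / 2)) t * (t - (Cq - 2 * Cq / ((k₂ : ℝ) - 1)))) := by
  have hk1 : (1:ℝ) ≤ (k₁:ℝ) - 1 := by
    have : (2:ℝ) ≤ (k₁:ℝ) := by exact_mod_cast hk₁
    linarith
  have hk2 : (k₁:ℝ) - 1 < (k₂:ℝ) - 1 := by
    have : (k₁:ℝ) < (k₂:ℝ) := by exact_mod_cast hk
    linarith
  set δ₁ := 2 * Cq / ((k₁ : ℝ) - 1) with hδ₁
  set δ₂ := 2 * Cq / ((k₂ : ℝ) - 1) with hδ₂
  have hδ2pos : 0 < δ₂ := by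
    apply div_pos (by linarith) (by linarith)
  have hδlt : δ₂ < δ₁ :=
    div_lt_div_of_pos_left (by linarith) (by linarith) hk2
  have hI₁ := integ_pos (Cq := Cq) hσ (hδ2pos.trans hδlt)
  have hI₂ := integ_pos (Cq := Cq) hσ hδ2pos
  have hkey := key (Cq := Cq) hσ hδ2pos hδlt
  apply Real.log_lt_log (by positivity)
  rw [div_lt_div_iff₀ (by positivity) hI₂]
  rw [div_lt_div_iff₀ hδ2pos (hδ2pos.trans hδlt)] at hkey
  nlinarith
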